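/- Let m = 66^144 and let G be the graph whose vertex set consists of two adjacent vertices u, v (the central pair) together with m pairs of adjacent vertices x_i, y_i (the outer pairs), where each x_i and each y_i is adjacent to both u and v, and there are no other edges. Then with 12 colors the players have a winning guessing strategy on G, i.e. HG(G) ≥ 12. -/

import Mathlib

/-- A winning hat-guessing strategy with `q` colors on the graph `G`: each vertex `v` has a
guessing function that depends only on the hat colors of its neighbors, and for every hat
assignment some vertex guesses its own hat color correctly. -/
def SimpleGraph.HatWinning {V : Type*} (G : SimpleGraph V) (q : ℕ) : Prop :=
  ∃ g : V → (V → Fin q) → Fin q,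
    (∀ (v : V) (h h' : V → Fin q), (∀ u, G.Adj v u → h u = h' u) → g v h = g v h') ∧
    ∀ h : V → Fin q, ∃ v, g v h = h v

/-- The hat guessing number of `G`: the largest number of colors admitting a winning strategy. -/
noncomputable def SimpleGraph.hatGuessingNumber {V : Type*} (G : SimpleGraph V) : ℕ :=
  sSup {q | G.HatWinning q}

/-- The graph consisting of a central adjacent pair `u, v` together with `m` adjacent pairs
`xᵢ, yᵢ`, where each `xᵢ` and each `yᵢ` is adjacent to both `u` and `v`, and no other edges.
The central pair is `Sum.inl false, Sum.inl true`; the `i`-th outer pair is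
`Sum.inr (i, false), Sum.inr (i, true)`. -/
def pairGraph (m : ℕ) : SimpleGraph (Bool ⊕ (Fin m × Bool)) where
  Adj a b :=
    match a, b with
    | .inl x, .inl y => x ≠ y
    | .inl _, .inr _ => True
    | .inr _, .inl _ => True
    | .inr (i, s), .inr (j, t) => i = j ∧ s ≠ t
  symm := by constructor; rintro (x | ⟨i, s⟩) (y | ⟨j, t⟩) h <;> simp_all <;> tauto
  loopless := by constructor; rintro (x | ⟨i, s⟩) h <;> simp_all

set_option maxRecDepth 4000

section HatAux


abbrev Cell := Fin 12 × Fin 12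

lemma two_le_filter {C : Finset Cell} (f : Cell → Fin 12)
    (hcol : ∀ p ∈ C, ∃ q ∈ C, f q = f p ∧ q ≠ p) (b : Fin 12)
    (hb : b ∈ C.image f) : 2 ≤ (C.filter (fun q => f q = b)).card := by
  obtain ⟨p, hp, hpb⟩ := Finset.mem_image.1 hb
  obtain ⟨q, hq, hqb, hqp⟩ := hcol p hp
  refine Finset.one_lt_card.2 ⟨p, ?_, q, ?_, fun h => hqp h.symm⟩ <;>
    simp_all [Finset.mem_filter]

lemma image_card_le_two {C : Finset Cell} (f : Cell → Fin 12) (h5 : C.card ≤ 5)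
    (hcol : ∀ p ∈ C, ∃ q ∈ C, f q = f p ∧ q ≠ p) : (C.image f).card ≤ 2 := by
  by_contra hc
  push_neg at hc
  obtain ⟨t, hts, htc⟩ := Finset.exists_subset_card_eq (show 3 ≤ (C.image f).card from hc)
  obtain ⟨b1, b2, b3, hb12, hb13, hb23, rfl⟩ := Finset.card_eq_three.1 htc
  have h1 := two_le_filter f hcol b1 (hts (by simp))
  have h2 := two_le_filter f hcol b2 (hts (by simp))
  have h3 := two_le_filter f hcol b3 (hts (by simp))
  have disj : ∀ b b' : Fin 12, b ≠ b' →
      Disjoint (C.filter (fun q => f q = b)) (C.filter (fun q => f q = b')) := by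
    intro b b' hbb
    rw [Finset.disjoint_left]
    intro a ha ha'
    simp only [Finset.mem_filter] at ha ha'
    exact hbb (ha.2 ▸ ha'.2 ▸ rfl)
  have hsub : (C.filter (fun q => f q = b1)) ∪ (C.filter (fun q => f q = b2))
      ∪ (C.filter (fun q => f q = b3)) ⊆ C := by
    intro a ha
    simp only [Finset.mem_union, Finset.mem_filter] at ha
    tauto
  have hcard := Finset.card_le_card hsub
  rw [Finset.card_union_of_disjoint, Finset.card_union_of_disjoint (disj _ _ hb12)] at hcard
  · omega
  · rw [Finset.disjoint_union_left]
    exact ⟨disj _ _ hb13, disj _ _ hb23⟩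

lemma two_vals {C : Finset Cell} (f : Cell → Fin 12) (h2 : (C.image f).card ≤ 2) :
    ∃ b1 b2 : Fin 12, ∀ p ∈ C, f p = b1 ∨ f p = b2 := by
  obtain ⟨u, hsu, _, huc⟩ := Finset.exists_subsuperset_card_eq
    (Finset.subset_univ (C.image f)) h2 (by simp)
  obtain ⟨b1, b2, _, rfl⟩ := Finset.card_eq_two.1 huc
  refine ⟨b1, b2, fun p hp => ?_⟩
  have := hsu (Finset.mem_image_of_mem f hp)
  simpa using this

lemma cover5 : ∀ n (C : Finset Cell), C.card ≤ n → C.card ≤ 5 →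
    ∃ g f : Fin 12 → Fin 12, ∀ p ∈ C, p.1 = g p.2 ∨ p.2 = f p.1 := by
  intro n
  induction n with
  | zero =>
    intro C hn _
    refine ⟨id, id, fun p hp => ?_⟩
    rw [Nat.le_zero, Finset.card_eq_zero] at hn
    simp [hn] at hp
  | succ n ih =>
    intro C hn h5
    by_cases hcol : ∃ p ∈ C, ∀ q ∈ C, q.2 = p.2 → q = p
    · obtain ⟨p, hp, hu⟩ := hcol
      obtain ⟨g, f, hgf⟩ := ih (C.erase p)
        (by have := Finset.card_erase_of_mem hp; omega)
        (by have := Finset.card_erase_of_mem hp; omega)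
      refine ⟨Function.update g p.2 p.1, f, fun q hq => ?_⟩
      by_cases hqp : q = p
      · subst hqp; left; simp
      · have hq' : q ∈ C.erase p := Finset.mem_erase.2 ⟨hqp, hq⟩
        rcases hgf q hq' with h1 | h2
        · left
          have : q.2 ≠ p.2 := fun h => hqp (hu q hq h)
          rw [Function.update_of_ne this]; exact h1
        · right; exact h2
    · by_cases hrow : ∃ p ∈ C, ∀ q ∈ C, q.1 = p.1 → q = p
      · obtain ⟨p, hp, hu⟩ := hrow
        obtain ⟨g, f, hgf⟩ := ih (C.erase p)
          (by have := Finset.card_erase_of_mem hp; omega)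
          (by have := Finset.card_erase_of_mem hp; omega)
        refine ⟨g, Function.update f p.1 p.2, fun q hq => ?_⟩
        by_cases hqp : q = p
        · subst hqp; right; simp
        · have hq' : q ∈ C.erase p := Finset.mem_erase.2 ⟨hqp, hq⟩
          rcases hgf q hq' with h1 | h2
          · left; exact h1
          · right
            have : q.1 ≠ p.1 := fun h => hqp (hu q hq h)
            rw [Function.update_of_ne this]; exact h2
      · push_neg at hcol hrow
        obtain ⟨b1, b2, hb⟩ := two_vals Prod.snd (image_card_le_two Prod.snd h5
          (fun p hp => hcol p hp))
        obtain ⟨a1, a2, ha⟩ := two_vals Prod.fst (image_card_le_two Prod.fst h5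
          (fun p hp => hrow p hp))
        refine ⟨fun b => if b = b1 then a1 else a2, fun a => if a = a1 then b2 else b1,
          fun p hp => ?_⟩
        rcases ha p hp with h1 | h1 <;> rcases hb p hp with h2 | h2
        · left; rw [h1, h2]; simp
        · right; rw [h1, h2]; simp
        · by_cases hab : a2 = a1
          · left; rw [h1, h2, hab]; simp
          · right; rw [h1, h2]; simp [hab]
        · by_cases hbb : b2 = b1
          · by_cases hab : a2 = a1
            · left; rw [h1, h2, hab, hbb]; simp
            · right; rw [h1, h2, hbb]; simp [hab]
          · left; rw [h1, h2]; simp [hbb]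

noncomputable def coverPair (C : Finset Cell) : (Fin 12 → Fin 12) × (Fin 12 → Fin 12) :=
  letI : Decidable (∃ gf : (Fin 12 → Fin 12) × (Fin 12 → Fin 12),
      ∀ p ∈ C, p.1 = gf.1 p.2 ∨ p.2 = gf.2 p.1) := Classical.propDecidable _
  if h : ∃ gf : (Fin 12 → Fin 12) × (Fin 12 → Fin 12),
      ∀ p ∈ C, p.1 = gf.1 p.2 ∨ p.2 = gf.2 p.1 then h.choose
  else default

lemma coverPair_spec {C : Finset Cell} (h5 : C.card ≤ 5) :
    ∀ p ∈ C, p.1 = (coverPair C).1 p.2 ∨ p.2 = (coverPair C).2 p.1 := by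
  obtain ⟨g, f, hgf⟩ := cover5 5 C h5 h5
  have hex : ∃ gf : (Fin 12 → Fin 12) × (Fin 12 → Fin 12),
      ∀ p ∈ C, p.1 = gf.1 p.2 ∨ p.2 = gf.2 p.1 := ⟨(g, f), hgf⟩
  rw [coverPair, dif_pos hex]
  exact hex.choose_spec

noncomputable def psi (i : Fin (66 ^ 144)) : Cell → Fin 6 :=
  (Fintype.equivFin (Cell → Fin 6)).symm
    ⟨(i : ℕ) % Fintype.card (Cell → Fin 6), Nat.mod_lt _ Fintype.card_pos⟩

lemma card_cellfun : Fintype.card (Cell → Fin 6) ≤ 66 ^ 144 := by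
  rw [Fintype.card_fun]
  simp only [Fintype.card_fin, Fintype.card_prod]
  calc (6 : ℕ) ^ (12 * 12) ≤ 66 ^ (12 * 12) := Nat.pow_le_pow_left (by norm_num) _
    _ = 66 ^ 144 := by norm_num

lemma psi_surj : Function.Surjective psi := by
  intro ρ
  refine ⟨⟨(Fintype.equivFin (Cell → Fin 6) ρ : ℕ), ?_⟩, ?_⟩
  · exact lt_of_lt_of_le (Fintype.equivFin (Cell → Fin 6) ρ).2 card_cellfun
  · unfold psi
    have : (⟨((Fintype.equivFin (Cell → Fin 6) ρ : ℕ)) % Fintype.card (Cell → Fin 6),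
        Nat.mod_lt _ Fintype.card_pos⟩ : Fin (Fintype.card (Cell → Fin 6))) =
        Fintype.equivFin (Cell → Fin 6) ρ :=
      Fin.ext (Nat.mod_eq_of_lt (Fintype.equivFin (Cell → Fin 6) ρ).2)
    rw [this]
    exact Equiv.symm_apply_apply _ _

/-- the two sum-targets of pair `i` at central colors `c` -/
noncomputable def tgt (i : Fin (66 ^ 144)) (b : Bool) (c : Cell) : Fin 12 :=
  ⟨2 * (psi i c).1 + (cond b 1 0), by have := (psi i c).2; cases b <;> simp <;> omega⟩

abbrev HV := Bool ⊕ (Fin (66 ^ 144) × Bool)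

/-- outer sums -/
noncomputable def osum (h : HV → Fin 12) (i : Fin (66 ^ 144)) : Fin 12 :=
  h (.inr (i, false)) + h (.inr (i, true))

/-- the surviving predicate -/
def survPred (h : HV → Fin 12) (c : Cell) : Prop :=
  ∀ i, osum h i ≠ tgt i false c ∧ osum h i ≠ tgt i true c

noncomputable instance survPredDec (h : HV → Fin 12) : DecidablePred (survPred h) :=
  fun _ => Classical.propDecidable _

/-- surviving central color pairs -/
noncomputable def surv (h : HV → Fin 12) : Finset Cell :=
  Finset.univ.filter (survPred h)

noncomputable def strat : HV → (HV → Fin 12) → Fin 12 := fun w h =>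
  match w with
  | .inl false => (coverPair (surv h)).1 (h (.inl true))
  | .inl true  => (coverPair (surv h)).2 (h (.inl false))
  | .inr (i, b) => tgt i b (h (.inl false), h (.inl true)) - h (.inr (i, !b))

lemma surv_card_le (h : HV → Fin 12) : (surv h).card ≤ 5 := by
  by_contra h6
  push_neg at h6
  obtain ⟨t, htsub, htc⟩ := Finset.exists_subset_card_eq (show 6 ≤ (surv h).card from h6)
  let e : Fin 6 → Cell := fun j => (t.equivFin.symm (finCongr htc.symm j) : t).1
  have einj : Function.Injective e :=
    Subtype.val_injective.comp (t.equivFin.symm.injective.comp (finCongr htc.symm).injective)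
  have emem : ∀ j, e j ∈ surv h := fun j => htsub (t.equivFin.symm (finCongr htc.symm j)).2
  obtain ⟨i, hi⟩ := psi_surj (Function.invFun e)
  set s : Fin 12 := osum h i with hs
  have hs2 : (s : ℕ) < 12 := s.2
  have hj6 : (s : ℕ) / 2 < 6 := by omega
  have hpsi : psi i (e ⟨(s : ℕ) / 2, hj6⟩) = ⟨(s : ℕ) / 2, hj6⟩ := by
    rw [hi]; exact Function.leftInverse_invFun einj _
  have hne := (Finset.mem_filter.1 (emem ⟨(s : ℕ) / 2, hj6⟩)).2 i
  have hval0 : (tgt i false (e ⟨(s : ℕ) / 2, hj6⟩) : ℕ) = 2 * ((s : ℕ) / 2) := by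
    simp [tgt, hpsi]
  have hval1 : (tgt i true (e ⟨(s : ℕ) / 2, hj6⟩) : ℕ) = 2 * ((s : ℕ) / 2) + 1 := by
    simp [tgt, hpsi]
  rcases Nat.even_or_odd (s : ℕ) with hpar | hpar
  · exact hne.1 (Fin.ext (by rw [hval0]; rcases hpar with ⟨k, hk⟩; omega))
  · exact hne.2 (Fin.ext (by rw [hval1]; rcases hpar with ⟨k, hk⟩; omega))


lemma hatWinning_le_card {V : Type*} [Fintype V] [DecidableEq V] [Nonempty V]
    (G : SimpleGraph V) {q : ℕ} (hw : G.HatWinning q) : q ≤ Fintype.card V := by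
  classical
  by_contra hq
  push_neg at hq
  obtain ⟨g, hloc, hwin⟩ := hw
  set n := Fintype.card V with hn
  have hn1 : 1 ≤ n := Fintype.card_pos
  let S : V → Finset (V → Fin q) := fun v => Finset.univ.filter (fun h => g v h = h v)
  have hcover : (Finset.univ : Finset (V → Fin q)) ⊆ Finset.univ.biUnion S := by
    intro h _
    obtain ⟨v, hv⟩ := hwin h
    exact Finset.mem_biUnion.2 ⟨v, Finset.mem_univ v,
      Finset.mem_filter.2 ⟨Finset.mem_univ _, hv⟩⟩
  have hsub : ∀ v : V, Fintype.card {w : V // w ≠ v} = n - 1 := by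
    intro v
    have : Fintype.card {w : V // w ≠ v} = Fintype.card {w : V // ¬ w = v} := rfl
    rw [this, Fintype.card_subtype_compl, Fintype.card_subtype_eq]
  have hSv : ∀ v, (S v).card ≤ q ^ (n - 1) := by
    intro v
    have hle : (S v).card ≤ Fintype.card ({w : V // w ≠ v} → Fin q) := by
      rw [← Finset.card_univ]
      apply Finset.card_le_card_of_injOn (fun h (w : {w : V // w ≠ v}) => h w.1)
        (fun _ _ => Finset.mem_univ _)
      intro h1 h1m h2 h2m heq
      have hnb : ∀ z, G.Adj v z → h1 z = h2 z := by
        intro z hz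
        have hzv : z ≠ v := fun hc => G.irrefl (hc ▸ hz)
        exact congrFun heq ⟨z, hzv⟩
      have hv1 : g v h1 = h1 v := (Finset.mem_filter.1 h1m).2
      have hv2 : g v h2 = h2 v := (Finset.mem_filter.1 h2m).2
      funext w
      by_cases hwv : w = v
      · rw [hwv, ← hv1, ← hv2, hloc v h1 h2 hnb]
      · exact congrFun heq ⟨w, hwv⟩
    calc (S v).card ≤ _ := hle
      _ = q ^ (n - 1) := by rw [Fintype.card_fun, Fintype.card_fin, hsub v]
  have total : q ^ n ≤ n * q ^ (n - 1) := by
    calc q ^ n = Fintype.card (V → Fin q) := by rw [Fintype.card_fun, Fintype.card_fin]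
      _ = (Finset.univ : Finset (V → Fin q)).card := Finset.card_univ.symm
      _ ≤ (Finset.univ.biUnion S).card := Finset.card_le_card hcover
      _ ≤ ∑ v, (S v).card := Finset.card_biUnion_le
      _ ≤ ∑ _v : V, q ^ (n - 1) := Finset.sum_le_sum (fun v _ => hSv v)
      _ = n * q ^ (n - 1) := by rw [Finset.sum_const, Finset.card_univ, smul_eq_mul]
  have hqpos : 0 < q := by omega
  have hpow : 0 < q ^ (n - 1) := pow_pos hqpos _
  have hsplit : q ^ n = q * q ^ (n - 1) := by
    conv_lhs => rw [show n = (n - 1) + 1 by omega]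
    rw [pow_succ]; ring
  have hlt : n * q ^ (n - 1) < q * q ^ (n - 1) := by
    exact Nat.mul_lt_mul_of_lt_of_le hq (le_refl _) hpow
  omega

end HatAux

/-- For `m = 66 ^ 144`, the graph consisting of a central adjacent pair and
`m` outer adjacent pairs (each outer vertex adjacent to both central vertices) admits a winning
guessing strategy with 12 colors; in particular its hat guessing number is at least 12. -/
theorem pairGraph_hatWinning_twelve :
    (pairGraph (66 ^ 144)).HatWinning 12 ∧
      12 ≤ (pairGraph (66 ^ 144)).hatGuessingNumber := by
  have adj_center : (pairGraph (66 ^ 144)).Adj (Sum.inl false) (Sum.inl true) :=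
    Bool.false_ne_true
  have adj_center' : (pairGraph (66 ^ 144)).Adj (Sum.inl true) (Sum.inl false) :=
    fun h => Bool.noConfusion h
  have hwin : (pairGraph (66 ^ 144)).HatWinning 12 := by
    refine ⟨strat, ?_, ?_⟩
    · rintro (b | ⟨i, b⟩) h h' hag
      · have hsurv : surv h = surv h' := by
          ext c
          simp only [surv, Finset.mem_filter, Finset.mem_univ, true_and, survPred]
          refine forall_congr' fun i => ?_
          have e0 : h (.inr (i, false)) = h' (.inr (i, false)) := hag _ trivial
          have e1 : h (.inr (i, true)) = h' (.inr (i, true)) := hag _ trivial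
          have : osum h i = osum h' i := by unfold osum; rw [e0, e1]
          rw [this]
        cases b
        · show (coverPair (surv h)).1 (h (.inl true)) =
            (coverPair (surv h')).1 (h' (.inl true))
          rw [hsurv, hag _ adj_center]
        · show (coverPair (surv h)).2 (h (.inl false)) =
            (coverPair (surv h')).2 (h' (.inl false))
          rw [hsurv, hag _ adj_center']
      · show tgt i b (h (.inl false), h (.inl true)) - h (.inr (i, !b)) =
          tgt i b (h' (.inl false), h' (.inl true)) - h' (.inr (i, !b))
        have hmate : (pairGraph (66 ^ 144)).Adj (Sum.inr (i, b)) (Sum.inr (i, !b)) :=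
          ⟨rfl, by cases b <;> simp⟩
        rw [hag (Sum.inl false) trivial, hag (Sum.inl true) trivial, hag _ hmate]
    · intro h
      by_contra hcon
      push_neg at hcon
      have hc : (h (.inl false), h (.inl true)) ∈ surv h := by
        refine Finset.mem_filter.2 ⟨Finset.mem_univ _, fun i => ⟨?_, ?_⟩⟩
        · intro hEq
          apply hcon (Sum.inr (i, false))
          show tgt i false (h (.inl false), h (.inl true)) - h (.inr (i, !false)) =
            h (.inr (i, false))
          rw [← hEq]
          show osum h i - h (.inr (i, true)) = h (.inr (i, false))
          rw [osum]
          exact add_sub_cancel_right _ _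
        · intro hEq
          apply hcon (Sum.inr (i, true))
          show tgt i true (h (.inl false), h (.inl true)) - h (.inr (i, !true)) =
            h (.inr (i, true))
          rw [← hEq]
          show osum h i - h (.inr (i, false)) = h (.inr (i, true))
          rw [osum]
          exact add_sub_cancel_left _ _
      rcases coverPair_spec (surv_card_le h) _ hc with h1 | h2
      · exact hcon (Sum.inl false)
          (show (coverPair (surv h)).1 (h (.inl true)) = h (.inl false) from h1.symm)
      · exact hcon (Sum.inl true)
          (show (coverPair (surv h)).2 (h (.inl false)) = h (.inl true) from h2.symm)
  have hbdd : BddAbove {q | (pairGraph (66 ^ 144)).HatWinning q} :=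
    ⟨Fintype.card (Bool ⊕ (Fin (66 ^ 144) × Bool)),
      fun q hq => hatWinning_le_card _ hq⟩
  exact ⟨hwin, le_csSup hbdd hwin⟩
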